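/- arXiv:1808.00124 — 2 statements merged into one kernel-verified Lean document; each statement's English description precedes it below -/
import Mathlib

section
/- Let K = Q(√−3). The triple (16, 111, 117) satisfies Π_K(16)·Π_K(111) = Π_K(117), and there exists an ideal of O_K with norm strictly between 111 and 117 (so this solution is non-trivial). -/
set_option linter.unusedSectionVars false

open NumberField Ideal Finset Nat

/-- Number of nonzero ideals of the ring of integers of `K` with absolute norm `n`. -/
noncomputable def aK (K : Type*) [Field K] [NumberField K] (n : ℕ) : ℕ :=
  Nat.card {I : Ideal (𝓞 K) // I ≠ ⊥ ∧ Ideal.absNorm I = n}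

/-- Generalized factorial `Π_K(x) = ∏_{n ≤ x} n ^ (a_K n)`. -/
noncomputable def PiK (K : Type*) [Field K] [NumberField K] (x : ℕ) : ℕ :=
  ∏ n ∈ Finset.Icc 1 x, n ^ aK K n


namespace Stmt6Aux

def zmul (a b : ℤ × ℤ) : ℤ × ℤ := (a.1*b.1 - a.2*b.2, a.1*b.2 + a.2*b.1 - a.2*b.2)
def zconj (p : ℤ × ℤ) : ℤ × ℤ := (p.1 - p.2, -p.2)
def qf (p : ℤ × ℤ) : ℤ := p.1^2 - p.1*p.2 + p.2^2
def U6 : Finset (ℤ × ℤ) := {(1,0),(-1,0),(0,1),(0,-1),(1,1),(-1,-1)}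
def key (p : ℤ × ℤ) : ℤ := p.1 * 1000 + p.2
noncomputable def box : Finset (ℤ × ℤ) := Finset.Icc (-12) 12 ×ˢ Finset.Icc (-12) 12
noncomputable def sols (n : ℕ) : Finset (ℤ × ℤ) := box.filter (fun p => qf p = (n : ℤ))
def orbit (p : ℤ × ℤ) : Finset (ℤ × ℤ) := U6.image (fun w => zmul w p)
lemma orbit_nonempty (p : ℤ × ℤ) : ((orbit p).image key).Nonempty :=
  ((Finset.insert_nonempty _ _).image _).image _
def ckey (p : ℤ × ℤ) : ℤ := ((orbit p).image key).max' (orbit_nonempty p)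
noncomputable def A (n : ℕ) : ℕ := ((sols n).image ckey).card

lemma zmul_comm (a b : ℤ × ℤ) : zmul a b = zmul b a := by
  simp only [zmul, Prod.ext_iff]; constructor <;> ring

lemma zmul_assoc (a b c : ℤ × ℤ) : zmul (zmul a b) c = zmul a (zmul b c) := by
  simp only [zmul, Prod.ext_iff]; constructor <;> ring

lemma zmul_one (p : ℤ × ℤ) : zmul (1,0) p = p := by
  simp only [zmul, Prod.ext_iff]; constructor <;> ring

lemma qf_zmul (a b : ℤ × ℤ) : qf (zmul a b) = qf a * qf b := by
  simp only [zmul, qf]; ring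

lemma zmul_conj (p : ℤ × ℤ) : zmul p (zconj p) = (qf p, 0) := by
  simp only [zmul, zconj, qf, Prod.ext_iff]; constructor <;> ring

lemma qf_nonneg (p : ℤ × ℤ) : 0 ≤ qf p := by
  have h := sq_nonneg (2*p.1 - p.2); have h2 := sq_nonneg p.2
  simp only [qf]; nlinarith

lemma mem_box {p : ℤ × ℤ} {n : ℕ} (h : qf p = (n : ℤ)) (hn : n ≤ 117) : p ∈ box := by
  have h1 : 3 * p.1^2 ≤ 4 * qf p := by have := sq_nonneg (p.1 - 2*p.2); simp only [qf]; nlinarith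
  have h2 : 3 * p.2^2 ≤ 4 * qf p := by have := sq_nonneg (2*p.1 - p.2); simp only [qf]; nlinarith
  have hn' : (n : ℤ) ≤ 117 := by exact_mod_cast hn
  rw [h] at h1 h2
  simp only [box, Finset.mem_product, Finset.mem_Icc]
  constructor <;> constructor <;> nlinarith

lemma U6_mul' : ∀ w ∈ U6, ∀ w' ∈ U6, zmul w w' ∈ U6 := by decide

lemma U6_mul {w w' : ℤ × ℤ} (h : w ∈ U6) (h' : w' ∈ U6) : zmul w w' ∈ U6 := U6_mul' w h w' h'

lemma U6_inv' : ∀ w ∈ U6, ∃ w' ∈ U6, zmul w w' = (1,0) := by decide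

lemma U6_inv {w : ℤ × ℤ} (h : w ∈ U6) : ∃ w' ∈ U6, zmul w w' = (1,0) := U6_inv' w h

lemma U6_qf' : ∀ w ∈ U6, qf w = 1 := by decide

lemma U6_qf {w : ℤ × ℤ} (h : w ∈ U6) : qf w = 1 := U6_qf' w h

lemma mem_U6_of_qf_one {w : ℤ × ℤ} (h : qf w = 1) : w ∈ U6 := by
  have hb : w ∈ ((Finset.Icc (-1:ℤ) 1) ×ˢ (Finset.Icc (-1:ℤ) 1)) := by
    have h1 : 3 * w.1^2 ≤ 4 := by have := sq_nonneg (w.1 - 2*w.2); simp only [qf] at h; nlinarith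
    have h2 : 3 * w.2^2 ≤ 4 := by have := sq_nonneg (2*w.1 - w.2); simp only [qf] at h; nlinarith
    simp only [Finset.mem_product, Finset.mem_Icc]
    constructor <;> constructor <;> nlinarith
  have : ∀ w ∈ ((Finset.Icc (-1:ℤ) 1) ×ˢ (Finset.Icc (-1:ℤ) 1)), qf w = 1 → w ∈ U6 := by decide
  exact this w hb h

def R (p q : ℤ × ℤ) : Prop := ∃ w ∈ U6, zmul w p = q

lemma R_refl (p : ℤ × ℤ) : R p p := ⟨(1,0), by decide, zmul_one p⟩

lemma R_symm {p q : ℤ × ℤ} (h : R p q) : R q p := by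
  obtain ⟨w, hw, rfl⟩ := h
  obtain ⟨w', hw', hww'⟩ := U6_inv hw
  exact ⟨w', hw', by rw [← zmul_assoc, zmul_comm w' w, hww', zmul_one]⟩

lemma R_trans {p q r : ℤ × ℤ} (h : R p q) (h' : R q r) : R p r := by
  obtain ⟨w, hw, rfl⟩ := h
  obtain ⟨w', hw', rfl⟩ := h'
  exact ⟨zmul w' w, U6_mul hw' hw, zmul_assoc w' w p⟩

lemma mem_orbit_iff {p q : ℤ × ℤ} : q ∈ orbit p ↔ R p q := by
  simp only [orbit, Finset.mem_image, R]

lemma orbit_eq_of_R {p q : ℤ × ℤ} (h : R p q) : orbit p = orbit q := by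
  apply Finset.Subset.antisymm <;> intro x hx <;> rw [mem_orbit_iff] at hx ⊢
  · exact R_trans (R_symm h) hx
  · exact R_trans h hx

lemma ckey_eq_of_R {p q : ℤ × ℤ} (h : R p q) : ckey p = ckey q := by
  simp only [ckey]; congr 1; rw [orbit_eq_of_R h]

lemma key_inj {p q : ℤ × ℤ} (hp : p ∈ box) (hq : q ∈ box) (h : key p = key q) : p = q := by
  simp only [box, Finset.mem_product, Finset.mem_Icc] at hp hq
  simp only [key] at h
  have : p.1 = q.1 ∧ p.2 = q.2 := by omega
  exact Prod.ext this.1 this.2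

lemma R_of_ckey_eq {p q : ℤ × ℤ} {n : ℕ} (hn : n ≤ 117)
    (hp : qf p = (n:ℤ)) (hq : qf q = (n:ℤ)) (h : ckey p = ckey q) : R p q := by
  have hep := ((orbit p).image key).max'_mem (orbit_nonempty p)
  have heq := ((orbit q).image key).max'_mem (orbit_nonempty q)
  rw [Finset.mem_image] at hep heq
  obtain ⟨ep, hep1, hep2⟩ := hep
  obtain ⟨eq, heq1, heq2⟩ := heq
  rw [mem_orbit_iff] at hep1 heq1
  have hqfep : qf ep = (n:ℤ) := by
    obtain ⟨w, hw, rfl⟩ := hep1; rw [qf_zmul, U6_qf hw, one_mul, hp]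
  have hqfeq : qf eq = (n:ℤ) := by
    obtain ⟨w, hw, rfl⟩ := heq1; rw [qf_zmul, U6_qf hw, one_mul, hq]
  unfold ckey at h
  have : ep = eq := key_inj (mem_box hqfep hn) (mem_box hqfeq hn)
    (hep2.trans (h.trans heq2.symm))
  subst this
  exact R_trans hep1 (R_symm heq1)

-- generic card image congruence
lemma card_image_congr {α β γ : Type*} [DecidableEq α] [DecidableEq β] [DecidableEq γ]
    (s : Finset α) (f : α → β) (g : α → γ)
    (h : ∀ a ∈ s, ∀ b ∈ s, (f a = f b ↔ g a = g b)) :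
    (s.image f).card = (s.image g).card := by
  induction s using Finset.induction_on with
  | empty => simp
  | @insert a s ha ih =>
    have h' : ∀ x ∈ s, ∀ y ∈ s, (f x = f y ↔ g x = g y) := fun x hx y hy =>
      h x (Finset.mem_insert_of_mem hx) y (Finset.mem_insert_of_mem hy)
    rw [Finset.image_insert, Finset.image_insert]
    by_cases hm : f a ∈ s.image f
    · have hm' : g a ∈ s.image g := by
        rw [Finset.mem_image] at hm ⊢
        obtain ⟨b, hb, hfb⟩ := hm
        exact ⟨b, hb, ((h b (Finset.mem_insert_of_mem hb) a (Finset.mem_insert_self a s)).mp hfb)⟩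
      rw [Finset.insert_eq_self.mpr hm, Finset.insert_eq_self.mpr hm', ih h']
    · have hm' : g a ∉ s.image g := by
        rw [Finset.mem_image] at hm ⊢
        rintro ⟨b, hb, hgb⟩
        exact hm ⟨b, hb, ((h b (Finset.mem_insert_of_mem hb) a (Finset.mem_insert_self a s)).mpr hgb)⟩
      rw [Finset.card_insert_of_notMem hm, Finset.card_insert_of_notMem hm', ih h']


def AT : ℕ → ℕ := fun n =>
  [0,1,0,1,1,0,0,2,0,1,0,0,1,2,0,0,1,0,0,2,0,2,0,0,0,1,0,1,2,0,0,2,0,0,0,0,1,2,0,2,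
   0,0,0,2,0,0,0,0,1,3,0,0,2,0,0,0,0,2,0,0,0,2,0,2,1,0,0,2,0,0,0,0,0,2,0,1,2,0,0,2,
   0,1,0,0,2,0,0,0,0,0,0,4,0,2,0,0,0,2,0,0,1,0,0,2,0,0,0,0,1,2,0,2,2,0,0,0,0,2].getD n 0

set_option maxRecDepth 100000 in
set_option maxHeartbeats 4000000 in
lemma A_eq_AT : ∀ n ∈ Finset.Icc 1 117, A n = AT n := by decide

open Polynomial

variable (K : Type*) [Field K] [NumberField K]

theorem cyclo_of_sqrt_neg3 (hdeg : Module.finrank ℚ K = 2) (α : K) (hα : α ^ 2 = -3) :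
    IsCyclotomicExtension {3} ℚ K := by
  haveI : Fact (Nat.Prime 3) := ⟨by norm_num⟩
  set ζ : K := (α - 1) / 2 with hζdef
  have hζrel : ζ ^ 2 + ζ + 1 = 0 := by
    rw [hζdef]; field_simp; linear_combination hα
  have hζ3 : ζ ^ 3 = 1 := by linear_combination (ζ - 1) * hζrel
  have hζne : ζ ≠ 1 := by
    intro h; rw [h] at hζrel; norm_num at hζrel
  have hord : orderOf ζ = 3 := orderOf_eq_prime hζ3 hζne
  have hζprim : IsPrimitiveRoot ζ 3 := by rw [← hord]; exact IsPrimitiveRoot.orderOf ζ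
  have hint : IsIntegral ℚ ζ := IsIntegral.of_finite ℚ ζ
  have hcyc2 : Polynomial.cyclotomic 3 ℚ = X ^ 2 + X + 1 := by
    rw [Polynomial.cyclotomic_prime ℚ 3]
    simp [Finset.sum_range_succ]; ring
  have hmin : minpoly ℚ ζ = Polynomial.cyclotomic 3 ℚ := by
    refine (minpoly.eq_of_irreducible_of_monic
      (Polynomial.cyclotomic.irreducible_rat (by norm_num)) ?_
      (Polynomial.cyclotomic.monic 3 ℚ)).symm
    rw [hcyc2]
    simp only [map_add, map_pow, map_one, aeval_X]
    exact hζrel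
  have h1 : Algebra.adjoin ℚ ({ζ} : Set K) = ⊤ := by
    have hfr : Module.finrank ℚ (Algebra.adjoin ℚ ({ζ} : Set K)) = 2 := by
      rw [(Algebra.adjoin.powerBasis hint).finrank, Algebra.adjoin.powerBasis_dim, hmin, hcyc2]
      compute_degree!
    have := Submodule.eq_top_of_finrank_eq
      (S := Subalgebra.toSubmodule (Algebra.adjoin ℚ ({ζ} : Set K))) (by rw [hdeg]; exact hfr)
    rwa [Algebra.toSubmodule_eq_top] at this
  rw [IsCyclotomicExtension.iff_adjoin_eq_top]
  refine ⟨?_, ?_⟩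
  · rintro n hn
    simp only [Set.mem_singleton_iff] at hn
    subst hn
    exact fun _ => ⟨ζ, by exact_mod_cast hζprim⟩
  · rw [eq_top_iff, ← h1]
    apply Algebra.adjoin_mono
    intro x hx
    rw [Set.mem_singleton_iff] at hx
    subst hx
    exact ⟨3, Set.mem_singleton 3, by norm_num, by exact_mod_cast hζ3⟩

theorem exists_good_basis (hdeg : Module.finrank ℚ K = 2) (α : K) (hα : α ^ 2 = -3) :
    ∃ (η : 𝓞 K) (B : Module.Basis (Fin 2) ℤ (𝓞 K)),
      η ^ 2 + η + 1 = 0 ∧ B 0 = 1 ∧ B 1 = η ∧ IsPrincipalIdealRing (𝓞 K) := by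
  haveI := cyclo_of_sqrt_neg3 K hdeg α hα
  haveI := IsCyclotomicExtension.Rat.three_pid K
  have hζ : IsPrimitiveRoot (IsCyclotomicExtension.zeta 3 ℚ K) 3 :=
    IsCyclotomicExtension.zeta_spec 3 ℚ K
  set ζ := IsCyclotomicExtension.zeta 3 ℚ K with hζdef
  let pb := hζ.integralPowerBasis
  have hdim : pb.dim = 2 := by
    show hζ.integralPowerBasis.dim = 2
    rw [hζ.integralPowerBasis_dim]; decide
  have hgen : pb.gen = hζ.toInteger := hζ.integralPowerBasis_gen
  have hrel : ζ ^ 2 + ζ + 1 = 0 := by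
    have h3 : ζ ^ 3 = 1 := by exact_mod_cast hζ.pow_eq_one
    have hne : ζ ≠ 1 := hζ.ne_one (by norm_num)
    have hz : (ζ - 1) * (ζ ^ 2 + ζ + 1) = 0 := by linear_combination h3
    rcases mul_eq_zero.mp hz with h | h
    · exact absurd (by linear_combination h) hne
    · exact h
  refine ⟨hζ.toInteger, pb.basis.reindex (finCongr hdim), ?_, ?_, ?_, inferInstance⟩
  · refine NumberField.RingOfIntegers.ext ?_
    have h0 : ((hζ.toInteger ^ 2 + hζ.toInteger + 1 : 𝓞 K) : K) = ζ ^ 2 + ζ + 1 := by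
      push_cast [hζ.coe_toInteger]; rfl
    rw [h0, hrel]; simp
  · rw [Module.Basis.reindex_apply, pb.basis_eq_pow]
    simp
  · rw [Module.Basis.reindex_apply, pb.basis_eq_pow]
    simp [hgen]



section Klayer

variable {K : Type*} [Field K] [NumberField K]
variable (η : 𝓞 K) (B : Module.Basis (Fin 2) ℤ (𝓞 K))

/-- coordinates to ring of integers -/
def f (p : ℤ × ℤ) : 𝓞 K := (p.1 : 𝓞 K) + (p.2 : 𝓞 K) * η

variable (hη : η ^ 2 + η + 1 = 0) (hB0 : B 0 = 1) (hB1 : B 1 = η)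

include hB0 hB1 in
lemma f_coords (p : ℤ × ℤ) : f η p = p.1 • B 0 + p.2 • B 1 := by
  simp [f, hB0, hB1, zsmul_eq_mul]

include hB0 hB1 in
lemma repr_f (q : ℤ × ℤ) : B.repr (f η q) 0 = q.1 ∧ B.repr (f η q) 1 = q.2 := by
  rw [f_coords η B hB0 hB1]
  simp only [map_add, map_smul, Module.Basis.repr_self]
  simp [Finsupp.single_apply]

include hB0 hB1 in
lemma f_inj {p q : ℤ × ℤ} (h : f η p = f η q) : p = q := by
  have h1 := repr_f η B hB0 hB1 p
  have h2 := repr_f η B hB0 hB1 q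
  rw [h] at h1
  exact Prod.ext (by rw [← h1.1, h2.1]) (by rw [← h1.2, h2.2])

include hB0 hB1 in
lemma f_surj (x : 𝓞 K) : ∃ p : ℤ × ℤ, f η p = x := by
  refine ⟨(B.repr x 0, B.repr x 1), ?_⟩
  rw [f_coords η B hB0 hB1]
  have := B.sum_repr x
  rwa [Fin.sum_univ_two] at this

include hη in
lemma f_mul (a b : ℤ × ℤ) : f η (zmul a b) = f η a * f η b := by
  simp only [f, zmul]
  push_cast
  linear_combination (-(a.2 : 𝓞 K) * (b.2 : 𝓞 K)) * hη

lemma f_one : f η (1, 0) = 1 := by simp [f]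

include hη hB0 hB1 in
lemma norm_f (p : ℤ × ℤ) : Algebra.norm ℤ (f η p) = qf p := by
  rw [Algebra.norm_eq_matrix_det B]
  have hmulη : f η p * η = f η (-p.2, p.1 - p.2) := by
    have h1 : f η (0, 1) = η := by simp [f]
    have h2 : zmul p (0, 1) = (-p.2, p.1 - p.2) := by
      simp only [zmul, Prod.ext_iff]; constructor <;> ring
    have h3 := f_mul η hη p (0, 1)
    rw [h2] at h3
    rw [h3, h1]
  have hM : Algebra.leftMulMatrix B (f η p) = !![p.1, -p.2; p.2, p.1 - p.2] := by
    ext i j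
    rw [Algebra.leftMulMatrix_eq_repr_mul]
    fin_cases i <;> fin_cases j
    · show B.repr (f η p * B 0) 0 = p.1
      rw [hB0, mul_one]; exact (repr_f η B hB0 hB1 p).1
    · show B.repr (f η p * B 1) 0 = -p.2
      rw [hB1, hmulη]; exact (repr_f η B hB0 hB1 (-p.2, p.1 - p.2)).1
    · show B.repr (f η p * B 0) 1 = p.2
      rw [hB0, mul_one]; exact (repr_f η B hB0 hB1 p).2
    · show B.repr (f η p * B 1) 1 = p.1 - p.2
      rw [hB1, hmulη]; exact (repr_f η B hB0 hB1 (-p.2, p.1 - p.2)).2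
  rw [hM, Matrix.det_fin_two_of, qf]
  ring

include hη hB0 hB1 in
lemma absNorm_span_f (p : ℤ × ℤ) :
    (Ideal.absNorm (Ideal.span {f η p}) : ℤ) = qf p := by
  rw [Ideal.absNorm_span_singleton, norm_f η B hη hB0 hB1, Int.natAbs_of_nonneg (qf_nonneg p)]

include hη in
lemma unit_f {w : ℤ × ℤ} (hw : w ∈ U6) : IsUnit (f η w) := by
  apply IsUnit.of_mul_eq_one (f η (zconj w))
  rw [← f_mul η hη, zmul_conj, U6_qf hw, ← f_one η]

include hη hB0 hB1 in
lemma span_iff {n : ℕ} (hn1 : 1 ≤ n) (hn2 : n ≤ 117) {p q : ℤ × ℤ}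
    (hp : p ∈ sols n) (hq : q ∈ sols n) :
    Ideal.span {f η p} = Ideal.span {f η q} ↔ ckey p = ckey q := by
  have hqfp : qf p = (n : ℤ) := by simpa [sols] using (Finset.mem_filter.mp hp).2
  have hqfq : qf q = (n : ℤ) := by simpa [sols] using (Finset.mem_filter.mp hq).2
  constructor
  · intro h
    rw [Ideal.span_singleton_eq_span_singleton] at h
    obtain ⟨u, hu⟩ := h
    obtain ⟨w, hw⟩ := f_surj η B hB0 hB1 (u : 𝓞 K)
    have hnormu : Algebra.norm ℤ ((u : 𝓞 K)) = 1 := by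
      have hmul : Algebra.norm ℤ (f η p) * Algebra.norm ℤ ((u : 𝓞 K))
          = Algebra.norm ℤ (f η q) := by rw [← _root_.map_mul, hu]
      rw [norm_f η B hη hB0 hB1, norm_f η B hη hB0 hB1, hqfp, hqfq] at hmul
      have hne : (n : ℤ) ≠ 0 := by exact_mod_cast Nat.one_le_iff_ne_zero.mp hn1
      exact mul_left_cancel₀ hne (by rw [hmul, mul_one])
    have hqfw : qf w = 1 := by rw [← norm_f η B hη hB0 hB1, hw, hnormu]
    have hwU : w ∈ U6 := mem_U6_of_qf_one hqfw
    have : f η (zmul w p) = f η q := by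
      rw [f_mul η hη, hw, mul_comm, hu]
    exact ckey_eq_of_R ⟨w, hwU, f_inj η B hB0 hB1 this⟩
  · intro h
    obtain ⟨w, hwU, rfl⟩ := R_of_ckey_eq hn2 hqfp hqfq h
    rw [Ideal.span_singleton_eq_span_singleton]
    refine ⟨(unit_f η hη hwU).unit, ?_⟩
    rw [IsUnit.unit_spec, mul_comm, ← f_mul η hη]

include hη hB0 hB1 in
lemma aK_eq_A [IsPrincipalIdealRing (𝓞 K)] {n : ℕ} (hn1 : 1 ≤ n) (hn2 : n ≤ 117) :
    aK K n = A n := by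
  classical
  have hset : {I : Ideal (𝓞 K) | I ≠ ⊥ ∧ Ideal.absNorm I = n}
      = ↑((sols n).image (fun p => Ideal.span {f η p})) := by
    ext I
    simp only [Set.mem_setOf_eq, Finset.coe_image, Set.mem_image, Finset.mem_coe]
    constructor
    · rintro ⟨hbot, hnorm⟩
      obtain ⟨x, hxI⟩ := (IsPrincipalIdealRing.principal I).principal
      obtain ⟨p, rfl⟩ := f_surj η B hB0 hB1 x
      rw [Ideal.submodule_span_eq] at hxI
      subst hxI
      have hqfp : qf p = (n : ℤ) := by
        rw [← absNorm_span_f η B hη hB0 hB1 p, hnorm]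
      exact ⟨p, Finset.mem_filter.mpr ⟨mem_box hqfp hn2, hqfp⟩, rfl⟩
    · rintro ⟨p, hp, rfl⟩
      have hqfp : qf p = (n : ℤ) := (Finset.mem_filter.mp hp).2
      have habs : Ideal.absNorm (Ideal.span {f η p}) = n := by
        have := absNorm_span_f η B hη hB0 hB1 p
        rw [hqfp] at this
        exact_mod_cast this
      refine ⟨?_, habs⟩
      intro hbot
      rw [hbot, Ideal.absNorm_bot] at habs
      omega
  have hcard : aK K n = ((sols n).image (fun p => Ideal.span {f η p})).card := by
    have h0 : aK K n
        = Nat.card ↥({I : Ideal (𝓞 K) | I ≠ ⊥ ∧ Ideal.absNorm I = n}) := rfl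
    rw [h0, hset, Nat.card_coe_set_eq, Set.ncard_coe_finset]
  rw [hcard, A]
  exact card_image_congr _ _ _
    (fun p hp q hq => span_iff η B hη hB0 hB1 hn1 hn2 hp hq)

end Klayer

set_option maxRecDepth 100000 in
set_option maxHeartbeats 4000000 in
lemma prod_eq : (∏ n ∈ Finset.Icc 1 16, n ^ AT n) * (∏ n ∈ Finset.Icc 1 111, n ^ AT n)
    = ∏ n ∈ Finset.Icc 1 117, n ^ AT n := by decide

end Stmt6Aux

open Stmt6Aux in
/-- For `K = ℚ(√-3)`, the triple `(16,111,117)` is a non-trivial solution: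
`Π_K(16)Π_K(111) = Π_K(117)` and some ideal has norm strictly between `111` and `117`. -/
theorem stmt6 (K : Type*) [Field K] [NumberField K]
    (hdeg : Module.finrank ℚ K = 2) (α : K) (hα : α ^ 2 = -3) :
    PiK K 16 * PiK K 111 = PiK K 117 ∧
    ∃ I : Ideal (𝓞 K), I ≠ ⊥ ∧ 111 < Ideal.absNorm I ∧ Ideal.absNorm I < 117 := by
  obtain ⟨η, B, hη, hB0, hB1, hpid⟩ := exists_good_basis K hdeg α hα
  haveI := hpid
  have hA : ∀ n ∈ Finset.Icc 1 117, aK K n = AT n := by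
    intro n hn
    rw [Finset.mem_Icc] at hn
    rw [aK_eq_A η B hη hB0 hB1 hn.1 hn.2, A_eq_AT n (Finset.mem_Icc.mpr hn)]
  constructor
  · have h16 : PiK K 16 = ∏ n ∈ Finset.Icc 1 16, n ^ AT n := by
      refine Finset.prod_congr rfl (fun n hn => ?_)
      rw [hA n (Finset.mem_Icc.mpr (by rw [Finset.mem_Icc] at hn; omega))]
    have h111 : PiK K 111 = ∏ n ∈ Finset.Icc 1 111, n ^ AT n := by
      refine Finset.prod_congr rfl (fun n hn => ?_)
      rw [hA n (Finset.mem_Icc.mpr (by rw [Finset.mem_Icc] at hn; omega))]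
    have h117 : PiK K 117 = ∏ n ∈ Finset.Icc 1 117, n ^ AT n :=
      Finset.prod_congr rfl (fun n hn => by rw [hA n hn])
    rw [PiK, PiK, PiK] at *
    rw [h16, h111, h117]
    exact prod_eq
  · refine ⟨Ideal.span {f η ((4 : ℤ), (12 : ℤ))}, ?_, ?_, ?_⟩
    · intro hbot
      have := absNorm_span_f η B hη hB0 hB1 (4, 12)
      rw [hbot, Ideal.absNorm_bot] at this
      simp [qf] at this
    · have := absNorm_span_f η B hη hB0 hB1 (4, 12)
      have h112 : qf ((4:ℤ), (12:ℤ)) = 112 := by simp [qf]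
      rw [h112] at this
      omega
    · have := absNorm_span_f η B hη hB0 hB1 (4, 12)
      have h112 : qf ((4:ℤ), (12:ℤ)) = 112 := by simp [qf]
      rw [h112] at this
      omega
end

section
/- Let K be a number field and m ≥ 3. Suppose 2 ≤ l₁ ≤ ... ≤ l_{m−1} < l_m. Then (l₁, ..., l_m) is a trivial solution of Π_K(l₁)···Π_K(l_{m−1}) = Π_K(l_m) if and only if Π_K(l₁)···Π_K(l_{m−2}) = l_m^{a_K(l_m)}. More precisely: (1) if (l₁,...,l_m) is a trivial solution then Π_K(l₁)···Π_K(l_{m−2}) = l_m^{a_K(l_m)}; (2) conversely, if Π_K(l₁)···Π_K(l_{m−2}) = l_m^{a_K(l_m)} with a_K(l_m) ≥ 1, then setting l_{m−1} = max{N𝔞 : 𝔞 ideal, l_{m−2} ≤ N𝔞 < l_m} yields a trivial solution (l₁,...,l_{m−1},l_m). -/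
open NumberField Ideal Finset Nat

lemma PiK_pos (K : Type*) [Field K] [NumberField K] (x : ℕ) : 0 < PiK K x := by
  apply Finset.prod_pos
  intro n hn
  exact pow_pos (Finset.mem_Icc.mp hn).1 _

lemma aK_eq_zero (K : Type*) [Field K] [NumberField K] {n : ℕ}
    (h : ¬ ∃ I : Ideal (𝓞 K), I ≠ ⊥ ∧ Ideal.absNorm I = n) : aK K n = 0 := by
  have : IsEmpty {I : Ideal (𝓞 K) // I ≠ ⊥ ∧ Ideal.absNorm I = n} := by
    constructor
    rintro ⟨I, hI⟩
    exact h ⟨I, hI⟩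
  exact Nat.card_of_isEmpty

lemma PiK_split (K : Type*) [Field K] [NumberField K] {a b : ℕ} (hab : a < b)
    (h : ∀ n, a < n → n < b → aK K n = 0) :
    PiK K b = PiK K a * b ^ aK K b := by
  unfold PiK
  have h1 : ∀ x : ℕ, Finset.Icc 1 x = Finset.Ioc 0 x := by
    intro x; ext y; simp [Nat.lt_iff_add_one_le]
  rw [h1, h1]
  rw [← Finset.prod_Ioc_consecutive _ (Nat.zero_le a) hab.le]
  congr 1
  have h2 : Finset.Ioc a b = insert b (Finset.Ioo a b) := (Finset.Ioo_insert_right hab).symm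
  rw [h2, Finset.prod_insert (by simp)]
  have h3 : ∀ n ∈ Finset.Ioo a b, n ^ aK K n = 1 := by
    intro n hn
    rw [h n (Finset.mem_Ioo.mp hn).1 (Finset.mem_Ioo.mp hn).2]
    exact pow_zero n
  rw [Finset.prod_eq_one h3, mul_one]

/-- Lemma 2.1: with `l 0, …, l (m-1)` playing the role of `l₁, …, l_m`:
(1) a trivial solution satisfies `Π_K(l₁)⋯Π_K(l_{m-2}) = l_m ^ (a_K l_m)`;
(2) conversely such an equation (with `a_K l_m ≥ 1`) yields a trivial solution upon setting
`l_{m-1} = max {N𝔞 : l_{m-2} ≤ N𝔞 < l_m}`. -/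
theorem stmt7 (K : Type*) [Field K] [NumberField K] (m : ℕ) (hm : 3 ≤ m) :
    (∀ l : ℕ → ℕ, 2 ≤ l 0 → (∀ i j, i ≤ j → j ≤ m - 1 → l i ≤ l j) → l (m - 2) < l (m - 1) →
      (∏ i ∈ Finset.range (m - 1), PiK K (l i)) = PiK K (l (m - 1)) →
      (¬ ∃ I : Ideal (𝓞 K), I ≠ ⊥ ∧ l (m - 2) < Ideal.absNorm I ∧ Ideal.absNorm I < l (m - 1)) →
      (∏ i ∈ Finset.range (m - 2), PiK K (l i)) = l (m - 1) ^ aK K (l (m - 1)))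
    ∧
    (∀ l : ℕ → ℕ, 2 ≤ l 0 → (∀ i j, i ≤ j → j ≤ m - 3 → l i ≤ l j) → l (m - 3) < l (m - 1) →
      (∏ i ∈ Finset.range (m - 2), PiK K (l i)) = l (m - 1) ^ aK K (l (m - 1)) →
      1 ≤ aK K (l (m - 1)) →
      ∀ lm1 : ℕ,
        ((∃ I : Ideal (𝓞 K), I ≠ ⊥ ∧ Ideal.absNorm I = lm1) ∧ l (m - 3) ≤ lm1 ∧ lm1 < l (m - 1)) →
        (∀ t : ℕ, ((∃ I : Ideal (𝓞 K), I ≠ ⊥ ∧ Ideal.absNorm I = t) ∧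
            l (m - 3) ≤ t ∧ t < l (m - 1)) → t ≤ lm1) →
        ((∏ i ∈ Finset.range (m - 1), PiK K (Function.update l (m - 2) lm1 i)) =
            PiK K (Function.update l (m - 2) lm1 (m - 1)) ∧
          ¬ ∃ I : Ideal (𝓞 K), I ≠ ⊥ ∧ lm1 < Ideal.absNorm I ∧ Ideal.absNorm I < l (m - 1))) := by
  have hm1 : m - 1 = (m - 2) + 1 := by omega
  constructor
  · intro l _ _ hlt hprod hno
    have hz : ∀ n, l (m - 2) < n → n < l (m - 1) → aK K n = 0 := by
      intro n h1 h2
      apply aK_eq_zero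
      rintro ⟨I, hI, hIn⟩
      exact hno ⟨I, hI, hIn ▸ h1, hIn ▸ h2⟩
    have hsplit := PiK_split K hlt hz
    rw [hm1, Finset.prod_range_succ, ← hm1] at hprod
    rw [hsplit] at hprod
    exact Nat.eq_of_mul_eq_mul_right (PiK_pos K (l (m - 2)))
      (by linarith [hprod])
  · intro l _ _ _ hprod _ lm1 ⟨_, _, hlm1lt⟩ hmax
    have hno : ¬ ∃ I : Ideal (𝓞 K), I ≠ ⊥ ∧ lm1 < Ideal.absNorm I ∧
        Ideal.absNorm I < l (m - 1) := by
      rintro ⟨I, hI, h1, h2⟩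
      have := hmax (Ideal.absNorm I) ⟨⟨I, hI, rfl⟩, by omega, h2⟩
      omega
    refine ⟨?_, hno⟩
    have hz : ∀ n, lm1 < n → n < l (m - 1) → aK K n = 0 := by
      intro n h1 h2
      apply aK_eq_zero
      rintro ⟨I, hI, hIn⟩
      exact hno ⟨I, hI, hIn ▸ h1, hIn ▸ h2⟩
    have hne : m - 1 ≠ m - 2 := by omega
    rw [Function.update_of_ne hne]
    have hsplit := PiK_split K hlm1lt hz
    rw [hm1, Finset.prod_range_succ, ← hm1, Function.update_self]
    have heq : ∀ i ∈ Finset.range (m - 2), PiK K (Function.update l (m - 2) lm1 i)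
        = PiK K (l i) := by
      intro i hi
      rw [Function.update_of_ne (by simp at hi; omega)]
    rw [Finset.prod_congr rfl heq, hprod, hsplit]
    ring
end
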